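/- If n is a positive integer and A is a set with {1, 3, ..., 2n-1} ⊆ A ⊆ {1, 2, ..., 2n} and |A| ≥ n + 4, then there exist five distinct integers b₁, ..., b₅ such that bᵢ + bⱼ ∈ A for all 1 ≤ i < j ≤ 5. -/
import Mathlib

private lemma card_odds (n : ℕ) :
    ((Finset.Icc (1 : ℤ) (2 * (n : ℤ))).filter (fun x => Odd x)).card = n := by
  induction n with
  | zero =>
    rw [show (2 * ((0:ℕ):ℤ)) = 0 by norm_num, Finset.Icc_eq_empty (by norm_num)]
    simp
  | succ m ih =>
    have hset : Finset.Icc (1 : ℤ) (2 * ((m : ℤ) + 1))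
        = insert (2 * (m : ℤ) + 2) (insert (2 * (m : ℤ) + 1) (Finset.Icc (1 : ℤ) (2 * (m : ℤ)))) := by
      ext x
      simp only [Finset.mem_Icc, Finset.mem_insert]
      omega
    push_cast
    rw [hset, Finset.filter_insert, Finset.filter_insert]
    rw [if_neg (by simp only [Int.odd_iff]; omega), if_pos (by simp only [Int.odd_iff]; omega)]
    rw [Finset.card_insert_of_notMem (by
      simp only [Finset.mem_filter, Finset.mem_Icc, Int.odd_iff, not_and]
      omega)]
    rw [ih]

private lemma construct (N : ℤ) (A : Finset ℤ)
    (hodd : (Finset.Icc (1 : ℤ) N).filter (fun x => Odd x) ⊆ A)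
    (x y z u v : ℤ) (hxy : x < y) (hyz : y < z) (huv : u < v)
    (h1 : x + y ∈ A) (h2 : x + z ∈ A) (h3 : y + z ∈ A) (h4 : u + v ∈ A)
    (hpar : (x + u) % 2 = 1) (hyx : (y - x) % 2 = 0) (hzx : (z - x) % 2 = 0)
    (hvu : (v - u) % 2 = 0) (hlo : 1 ≤ x + u) (hhi : z + v ≤ N) :
    ∃ b : Fin 5 → ℤ, Function.Injective b ∧
      ∀ i j : Fin 5, i < j → b i + b j ∈ A := by
  have mem : ∀ w : ℤ, 1 ≤ w → w ≤ N → w % 2 = 1 → w ∈ A := by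
    intro w hw1 hw2 hw3
    apply hodd
    simp only [Finset.mem_filter, Finset.mem_Icc, Int.odd_iff]
    exact ⟨⟨hw1, hw2⟩, hw3⟩
  have m1 : x + u ∈ A := mem _ (by omega) (by omega) (by omega)
  have m2 : x + v ∈ A := mem _ (by omega) (by omega) (by omega)
  have m3 : y + u ∈ A := mem _ (by omega) (by omega) (by omega)
  have m4 : y + v ∈ A := mem _ (by omega) (by omega) (by omega)
  have m5 : z + u ∈ A := mem _ (by omega) (by omega) (by omega)
  have m6 : z + v ∈ A := mem _ (by omega) (by omega) (by omega)
  refine ⟨fun i => if i.val = 0 then x else if i.val = 1 then y else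
      if i.val = 2 then z else if i.val = 3 then u else v, ?_, ?_⟩
  · intro i j hij
    fin_cases i <;> fin_cases j <;>
      first
        | rfl
        | (exfalso; norm_num at hij; omega)
  · intro i j hij
    fin_cases i <;> fin_cases j <;>
      first
        | exact absurd hij (by decide)
        | exact h1
        | exact h2
        | exact h3
        | exact h4
        | exact m1
        | exact m2
        | exact m3
        | exact m4
        | exact m5
        | exact m6

theorem stmt_11 (n : ℕ) (hn : 1 ≤ n) (A : Finset ℤ)
    (hodd : (Finset.Icc (1 : ℤ) (2 * (n : ℤ))).filter (fun x => Odd x) ⊆ A)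
    (hA : A ⊆ Finset.Icc 1 (2 * (n : ℤ))) (hcard : n + 4 ≤ A.card) :
    ∃ b : Fin 5 → ℤ, Function.Injective b ∧
      ∀ i j : Fin 5, i < j → b i + b j ∈ A := by
  classical
  set E := A.filter (fun x => ¬ Odd x) with hEdef
  have hEcard : 4 ≤ E.card := by
    have hsub : A.filter (fun x => Odd x) ⊆ (Finset.Icc (1 : ℤ) (2 * (n : ℤ))).filter (fun x => Odd x) := by
      intro x hx
      exact Finset.mem_filter.mpr ⟨hA (Finset.mem_filter.mp hx).1, (Finset.mem_filter.mp hx).2⟩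
    have h2 := Finset.card_le_card hsub
    rw [card_odds n] at h2
    have h3 := Finset.card_filter_add_card_filter_not (s := A) (p := fun x => Odd x)
    rw [hEdef]
    omega
  -- extract four increasing even elements
  have hE1 : E.Nonempty := Finset.card_pos.mp (by omega)
  set x1 := E.min' hE1 with hx1def
  have hx1 : x1 ∈ E := E.min'_mem hE1
  have hE2c : 3 ≤ (E.erase x1).card := by rw [Finset.card_erase_of_mem hx1]; omega
  have hE2 : (E.erase x1).Nonempty := Finset.card_pos.mp (by omega)
  set x2 := (E.erase x1).min' hE2 with hx2def
  have hx2' : x2 ∈ E.erase x1 := Finset.min'_mem _ hE2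
  have hx2 : x2 ∈ E := Finset.mem_of_mem_erase hx2'
  have h12 : x1 < x2 :=
    lt_of_le_of_ne (E.min'_le x2 hx2) (Ne.symm (Finset.ne_of_mem_erase hx2'))
  have hE3c : 2 ≤ ((E.erase x1).erase x2).card := by
    rw [Finset.card_erase_of_mem hx2']; omega
  have hE3 : ((E.erase x1).erase x2).Nonempty := Finset.card_pos.mp (by omega)
  set x3 := ((E.erase x1).erase x2).min' hE3 with hx3def
  have hx3' : x3 ∈ (E.erase x1).erase x2 := Finset.min'_mem _ hE3
  have hx3 : x3 ∈ E := Finset.mem_of_mem_erase (Finset.mem_of_mem_erase hx3')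
  have h23 : x2 < x3 :=
    lt_of_le_of_ne ((E.erase x1).min'_le x3 (Finset.mem_of_mem_erase hx3'))
      (Ne.symm (Finset.ne_of_mem_erase hx3'))
  have hE4c : 1 ≤ (((E.erase x1).erase x2).erase x3).card := by
    rw [Finset.card_erase_of_mem hx3']; omega
  have hE4 : (((E.erase x1).erase x2).erase x3).Nonempty := Finset.card_pos.mp (by omega)
  set x4 := (((E.erase x1).erase x2).erase x3).min' hE4 with hx4def
  have hx4' : x4 ∈ ((E.erase x1).erase x2).erase x3 := Finset.min'_mem _ hE4
  have hx4 : x4 ∈ E :=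
    Finset.mem_of_mem_erase (Finset.mem_of_mem_erase (Finset.mem_of_mem_erase hx4'))
  have h34 : x3 < x4 :=
    lt_of_le_of_ne (((E.erase x1).erase x2).min'_le x4 (Finset.mem_of_mem_erase hx4'))
      (Ne.symm (Finset.ne_of_mem_erase hx4'))
  -- each xi is even, in A, and in [1, 2n]
  have hxA : ∀ w, w ∈ E → w ∈ A ∧ ∃ t : ℤ, w = t + t ∧ 1 ≤ w ∧ w ≤ 2 * (n : ℤ) := by
    intro w hw
    have hwA : w ∈ A := (Finset.mem_filter.mp hw).1
    have hwe : Even w := Int.not_odd_iff_even.mp (Finset.mem_filter.mp hw).2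
    obtain ⟨t, ht⟩ := hwe
    have hrange := Finset.mem_Icc.mp (hA hwA)
    exact ⟨hwA, t, ht, hrange.1, hrange.2⟩
  obtain ⟨hA1, p, hp, hp1, hp2⟩ := hxA x1 hx1
  obtain ⟨hA2, q, hq, hq1, hq2⟩ := hxA x2 hx2
  obtain ⟨hA3, r, hr, hr1, hr2⟩ := hxA x3 hx3
  obtain ⟨hA4, s, hs, hs1, hs2⟩ := hxA x4 hx4
  have hApp : (p + p : ℤ) ∈ A := hp ▸ hA1
  have hAqq : (q + q : ℤ) ∈ A := hq ▸ hA2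
  have hArr : (r + r : ℤ) ∈ A := hr ▸ hA3
  have hAss : (s + s : ℤ) ∈ A := hs ▸ hA4
  have hpq : p < q := by omega
  have hqr : q < r := by omega
  have hrs : r < s := by omega
  have hp1' : 1 ≤ p := by omega
  have hsn : s ≤ (n : ℤ) := by omega
  by_cases hc : q + 2 * r - p + 2 ≤ 2 * (n : ℤ)
  · by_cases hpar : (p + q) % 2 = 0
    · refine construct (2 * (n : ℤ)) A hodd (p + q - r) (p + r - q) (q + r - p) (r - 1) (r + 1)
        (by omega) (by omega) (by omega)
        (by have h : (p + q - r) + (p + r - q) = p + p := by ring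
            rw [h]; exact hApp)
        (by have h : (p + q - r) + (q + r - p) = q + q := by ring
            rw [h]; exact hAqq)
        (by have h : (p + r - q) + (q + r - p) = r + r := by ring
            rw [h]; exact hArr)
        (by have h : (r - 1) + (r + 1) = r + r := by ring
            rw [h]; exact hArr)
        (by omega) (by omega) (by omega) (by omega) (by omega) (by omega)
    · refine construct (2 * (n : ℤ)) A hodd (p + q - r) (p + r - q) (q + r - p) (r - 2) (r + 2)
        (by omega) (by omega) (by omega)
        (by have h : (p + q - r) + (p + r - q) = p + p := by ring
            rw [h]; exact hApp)
        (by have h : (p + q - r) + (q + r - p) = q + q := by ring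
            rw [h]; exact hAqq)
        (by have h : (p + r - q) + (q + r - p) = r + r := by ring
            rw [h]; exact hArr)
        (by have h : (r - 2) + (r + 2) = r + r := by ring
            rw [h]; exact hArr)
        (by omega) (by omega) (by omega) (by omega) (by omega) (by omega)
  · by_cases hpar : (p + q + r + s) % 2 = 0
    · refine construct (2 * (n : ℤ)) A hodd (q + r - s) (q + s - r) (r + s - q) (p - 1) (p + 1)
        (by omega) (by omega) (by omega)
        (by have h : (q + r - s) + (q + s - r) = q + q := by ring
            rw [h]; exact hAqq)
        (by have h : (q + r - s) + (r + s - q) = r + r := by ring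
            rw [h]; exact hArr)
        (by have h : (q + s - r) + (r + s - q) = s + s := by ring
            rw [h]; exact hAss)
        (by have h : (p - 1) + (p + 1) = p + p := by ring
            rw [h]; exact hApp)
        (by omega) (by omega) (by omega) (by omega) (by omega) (by omega)
    · refine construct (2 * (n : ℤ)) A hodd (q + r - s) (q + s - r) (r + s - q) (p - 2) (p + 2)
        (by omega) (by omega) (by omega)
        (by have h : (q + r - s) + (q + s - r) = q + q := by ring
            rw [h]; exact hAqq)
        (by have h : (q + r - s) + (r + s - q) = r + r := by ring
            rw [h]; exact hArr)
        (by have h : (q + s - r) + (r + s - q) = s + s := by ring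
            rw [h]; exact hAss)
        (by have h : (p - 2) + (p + 2) = p + p := by ring
            rw [h]; exact hApp)
        (by omega) (by omega) (by omega) (by omega) (by omega) (by omega)
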